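/- Every sequential choice rule satisfies non-wastefulness and no justified envy, for any order of precedence over the categories and any (possibly overlapping) profile of category memberships. -/

import Mathlib

attribute [local instance] Classical.propDecidable

noncomputable section

variable {ι R : Type*} [Fintype ι] [DecidableEq ι] [Fintype R] [DecidableEq R]

/-- Eligibility sets: everyone is eligible for the open category (`none`),
and `elig c` is the set of members of VR-protected category `c`. -/
def eligOf (elig : R → Finset ι) : Option R → Finset ι
  | none => (Finset.univ : Finset ι)
  | some c => elig c

/-- Aggregate choice: all individuals chosen across all categories. -/
def aggC (C : Finset ι → Option R → Finset ι) (I : Finset ι) : Finset ι :=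
  Finset.univ.biUnion fun v => C I v

/-- `C` is a choice rule for capacities `q` and eligibility `elig`: each category chooses
eligible applicants up to capacity, and no individual is chosen by two categories. -/
def IsChoiceRule (q : Option R → ℕ) (elig : R → Finset ι)
    (C : Finset ι → Option R → Finset ι) : Prop :=
  ∀ I : Finset ι,
    (∀ v, C I v ⊆ I ∩ eligOf elig v) ∧
    (∀ v, (C I v).card ≤ q v) ∧
    (∀ v v', v ≠ v' → Disjoint (C I v) (C I v'))

/-- Non-wastefulness: no position remains idle while an eligible applicant is unchosen. -/
def NonWasteful (q : Option R → ℕ) (elig : R → Finset ι)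
    (C : Finset ι → Option R → Finset ι) : Prop :=
  ∀ (I : Finset ι) (v : Option R) (j : ι),
    j ∈ I → j ∉ aggC C I → (C I v).card < q v → j ∉ eligOf elig v

/-- No justified envy: a chosen individual outscores every eligible entirely-unchosen applicant. -/
def NoJustifiedEnvy (σ : ι → ℝ) (elig : R → Finset ι)
    (C : Finset ι → Option R → Finset ι) : Prop :=
  ∀ (I : Finset ι) (v : Option R) (i j : ι),
    i ∈ C I v → j ∈ I → j ∈ eligOf elig v → j ∉ aggC C I → σ j < σ i

/-- Compliance with VR protections: a VR recipient implies the open category is full, with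
every open-category recipient scoring strictly higher. -/
def CompliesVR (σ : ι → ℝ) (q : Option R → ℕ)
    (C : Finset ι → Option R → Finset ι) : Prop :=
  ∀ (I : Finset ι) (c : R) (i : ι), i ∈ C I (some c) →
    (C I none).card = q none ∧ ∀ j ∈ C I none, σ i < σ j

/-- The (at most) `k` highest merit-score members of `S`. -/
def topK (σ : ι → ℝ) (S : Finset ι) (k : ℕ) : Finset ι :=
  S.filter fun i => (S.filter fun j => σ i ≤ σ j).card ≤ k

/-- The Over-and-Above choice rule: open positions go to the top-merit applicants; then each
VR category's quota is filled by the highest-merit remaining eligible members. -/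
def OA (σ : ι → ℝ) (q : Option R → ℕ) (elig : R → Finset ι)
    (I : Finset ι) : Option R → Finset ι
  | none => topK σ I (q none)
  | some c => topK σ ((I \ topK σ I (q none)) ∩ elig c) (q (some c))

/-- The sequential choice rule: categories are processed in the order given by the list,
each filling its positions by serial dictatorship on the remaining eligible applicants. -/
def seqAssign (σ : ι → ℝ) (q : Option R → ℕ) (elig : R → Finset ι) :
    List (Option R) → Finset ι → Option R → Finset ι
  | [], _, _ => ∅
  | v :: rest, I, u =>
    let chosen := topK σ (I ∩ eligOf elig v) (q v)
    if u = v then chosen else seqAssign σ q elig rest (I \ chosen) u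

lemma topK_subset (σ : ι → ℝ) (S : Finset ι) (k : ℕ) : topK σ S k ⊆ S :=
  Finset.filter_subset _ _

lemma topK_lt (σ : ι → ℝ) {S : Finset ι} {k : ℕ} {i j : ι}
    (hi : i ∈ topK σ S k) (hjS : j ∈ S) (hj : j ∉ topK σ S k) : σ j < σ i := by
  by_contra h
  push_neg at h
  apply hj
  simp only [topK, Finset.mem_filter] at hi ⊢
  refine ⟨hjS, le_trans (Finset.card_le_card ?_) hi.2⟩
  intro t ht
  simp only [Finset.mem_filter] at ht ⊢
  exact ⟨ht.1, le_trans h ht.2⟩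

lemma topK_card_ge (σ : ι → ℝ) (hσ : Function.Injective σ) {S : Finset ι} {k : ℕ} {j : ι}
    (hjS : j ∈ S) (hj : j ∉ topK σ S k) : k ≤ (topK σ S k).card := by
  have hne : (S \ topK σ S k).Nonempty := ⟨j, Finset.mem_sdiff.mpr ⟨hjS, hj⟩⟩
  obtain ⟨s, hs, hmax⟩ := Finset.exists_max_image _ σ hne
  obtain ⟨hsS, hsN⟩ := Finset.mem_sdiff.mp hs
  have hk : k < (S.filter fun t => σ s ≤ σ t).card := by
    simp only [topK, Finset.mem_filter] at hsN
    push_neg at hsN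
    exact hsN hsS
  have hins : (S.filter fun t => σ s ≤ σ t) = insert s (S.filter fun t => σ s < σ t) := by
    ext t
    simp only [Finset.mem_insert, Finset.mem_filter]
    constructor
    · rintro ⟨htS, hle⟩
      rcases lt_or_eq_of_le hle with h | h
      · exact Or.inr ⟨htS, h⟩
      · exact Or.inl (hσ h).symm
    · rintro (rfl | ⟨htS, hlt⟩)
      · exact ⟨hsS, le_refl _⟩
      · exact ⟨htS, hlt.le⟩
  have hsnot : s ∉ (S.filter fun t => σ s < σ t) := by
    simp only [Finset.mem_filter]
    exact fun h => lt_irrefl _ h.2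
  have hcard : k ≤ (S.filter fun t => σ s < σ t).card := by
    rw [hins, Finset.card_insert_of_notMem hsnot] at hk
    omega
  refine le_trans hcard (Finset.card_le_card ?_)
  intro t ht
  simp only [Finset.mem_filter] at ht
  by_contra htN
  exact absurd (hmax t (Finset.mem_sdiff.mpr ⟨ht.1, htN⟩)) (not_le.mpr ht.2)

lemma seqAssign_subset (σ : ι → ℝ) (q : Option R → ℕ) (elig : R → Finset ι) :
    ∀ (L : List (Option R)) (I : Finset ι) (u : Option R),
      seqAssign σ q elig L I u ⊆ I := by
  intro L
  induction L with
  | nil => intro I u; simp [seqAssign]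
  | cons w rest ih =>
    intro I u
    simp only [seqAssign]
    split
    · exact (topK_subset _ _ _).trans Finset.inter_subset_left
    · exact (ih _ _).trans (Finset.sdiff_subset)

lemma seqAssign_not_mem (σ : ι → ℝ) (q : Option R → ℕ) (elig : R → Finset ι) :
    ∀ (L : List (Option R)) (I : Finset ι) (u : Option R),
      u ∉ L → seqAssign σ q elig L I u = ∅ := by
  intro L
  induction L with
  | nil => intro I u _; rfl
  | cons w rest ih =>
    intro I u hu
    simp only [List.mem_cons, not_or] at hu
    simp only [seqAssign, if_neg hu.1]
    exact ih _ _ hu.2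

lemma seqAssign_key (σ : ι → ℝ) (hσ : Function.Injective σ) (q : Option R → ℕ)
    (elig : R → Finset ι) :
    ∀ (L : List (Option R)), L.Nodup → ∀ (I : Finset ι) (v : Option R), v ∈ L →
      ∀ j : ι, j ∈ I → j ∈ eligOf elig v → (∀ u, j ∉ seqAssign σ q elig L I u) →
      q v ≤ (seqAssign σ q elig L I v).card ∧
        ∀ i ∈ seqAssign σ q elig L I v, σ j < σ i := by
  intro L
  induction L with
  | nil => intro _ I v hv; exact absurd hv List.not_mem_nil
  | cons w rest ih =>
    intro hnd I v hv j hjI hje hnot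
    have hndr := (List.nodup_cons.mp hnd).2
    have hwr := (List.nodup_cons.mp hnd).1
    by_cases hvw : v = w
    · subst hvw
      have heq : seqAssign σ q elig (v :: rest) I v = topK σ (I ∩ eligOf elig v) (q v) := by
        simp [seqAssign]
      rw [heq]
      have hjS : j ∈ I ∩ eligOf elig v := Finset.mem_inter.mpr ⟨hjI, hje⟩
      have hjN : j ∉ topK σ (I ∩ eligOf elig v) (q v) := by
        have := hnot v; rwa [heq] at this
      exact ⟨topK_card_ge σ hσ hjS hjN, fun i hi => topK_lt σ hi hjS hjN⟩
    · have hvr : v ∈ rest := by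
        rcases List.mem_cons.mp hv with h | h
        · exact absurd h hvw
        · exact h
      set chosen := topK σ (I ∩ eligOf elig w) (q w) with hch
      have heq : ∀ u, u ≠ w →
          seqAssign σ q elig (w :: rest) I u = seqAssign σ q elig rest (I \ chosen) u := by
        intro u hu; simp [seqAssign, if_neg hu, hch]
      have hjchosen : j ∉ chosen := by
        have := hnot w
        simpa [seqAssign] using this
      have hjI' : j ∈ I \ chosen := Finset.mem_sdiff.mpr ⟨hjI, hjchosen⟩
      have hnot' : ∀ u, j ∉ seqAssign σ q elig rest (I \ chosen) u := by
        intro u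
        by_cases hu : u = w
        · subst hu
          rw [seqAssign_not_mem σ q elig rest _ _ hwr]
          exact Finset.notMem_empty j
        · rw [← heq u hu]; exact hnot u
      have := ih hndr (I \ chosen) v hvr j hjI' hje hnot'
      rwa [heq v hvw]

/-- every sequential choice rule (for any order of precedence covering all
categories, and any possibly overlapping eligibility structure) satisfies non-wastefulness
and no justified envy. -/
theorem seq_nonWasteful_noJustifiedEnvy (σ : ι → ℝ) (hσ : Function.Injective σ)
    (q : Option R → ℕ) (elig : R → Finset ι)
    (order : List (Option R)) (hnd : order.Nodup) (hall : ∀ v : Option R, v ∈ order) :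
    NonWasteful q elig (seqAssign σ q elig order) ∧
      NoJustifiedEnvy σ elig (seqAssign σ q elig order) := by
  have key := seqAssign_key σ hσ q elig order hnd
  constructor
  · intro I v j hjI hjagg hcard hje
    have hnot : ∀ u, j ∉ seqAssign σ q elig order I u := by
      intro u hu
      exact hjagg (Finset.mem_biUnion.mpr ⟨u, Finset.mem_univ u, hu⟩)
    have := (key I v (hall v) j hjI hje hnot).1
    omega
  · intro I v i j hi hjI hje hjagg
    have hnot : ∀ u, j ∉ seqAssign σ q elig order I u := by
      intro u hu
      exact hjagg (Finset.mem_biUnion.mpr ⟨u, Finset.mem_univ u, hu⟩)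
    exact (key I v (hall v) j hjI hje hnot).2 i hi
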